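/- There is no continuous biadditive pairing ⊗̂: Z^1_0(ℙ^n) × Z^p_0(ℙ^m) → Z^p_0(ℙ^{nm+n+m}) for p ≥ 2 extending the tensor product of a line bundle and a rank-p bundle on linear cycles. Abstract form: there is no map μ: K(ℤ,2) × ∏_{i=1}^p K(ℤ,2i) → ∏_{i=1}^{nm+n+m} K(ℤ,2i) such that (π_1 × id)^* μ^*(i_4) = 1⊗i_4 + i_2⊗i_2 + i_4⊗1 in H^4(∏_{i=1}^n K(ℤ,2i) × ∏_{i=1}^p K(ℤ,2i); ℚ), where π_1: ∏_{i=1}^n K(ℤ,2i) → K(ℤ,2) is the first projection and n ≥ 2. -/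
import Mathlib


/-! **Non-existence of a general tensor pairing** (abstract form).  There is no
map `μ : K(ℤ,2) × ∏_{i=1}^p K(ℤ,2i) → ∏_{i=1}^{nm+n+m} K(ℤ,2i)` with
`(π₁ × id)^* μ^*(i₄) = 1⊗i₄ + i₂⊗i₂ + i₄⊗1` in
`H⁴(∏_{i=1}^n K(ℤ,2i) × ∏_{i=1}^p K(ℤ,2i); ℚ)`, where `π₁` is the first
projection and `n ≥ 2`.  On rational cohomology (with Künneth identifications)
`H^*(K(ℤ,2);ℚ) = ℚ[i₂]`, `H^*(∏_{i=1}^r K(ℤ,2i);ℚ) = ℚ[i₂,…,i₂ᵣ]`, the map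
`μ` is encoded by the induced `ℚ`-algebra homomorphism `μ^*`, and
`π₁^* : ℚ[i₂] → ℚ[i₂,…,i₂ₙ]` sends `i₂ ↦ i₂`; the fundamental classes are the
variables `i₂ = X 0`, `i₄ = X 1`. -/

open scoped TensorProduct

/-- `π₁^* : H^*(K(ℤ,2);ℚ) → H^*(∏_{i=1}^n K(ℤ,2i);ℚ)`, `i₂ ↦ i₂`. -/
noncomputable def pi1star (n : ℕ) (hn : 0 < n) :
    Polynomial ℚ →ₐ[ℚ] MvPolynomial (Fin n) ℚ :=
  Polynomial.aeval (MvPolynomial.X ⟨0, hn⟩)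

theorem no_general_tensor_pairing (n m p : ℕ) (hn : 2 ≤ n) (hp : 2 ≤ p) :
    ¬ ∃ μstar : MvPolynomial (Fin (n * m + n + m)) ℚ →ₐ[ℚ]
        (Polynomial ℚ ⊗[ℚ] MvPolynomial (Fin p) ℚ),
      (Algebra.TensorProduct.map (pi1star n (by omega))
          (AlgHom.id ℚ (MvPolynomial (Fin p) ℚ)))
        (μstar (MvPolynomial.X ⟨1, by nlinarith⟩)) =
      1 ⊗ₜ[ℚ] (MvPolynomial.X ⟨1, by omega⟩ : MvPolynomial (Fin p) ℚ) +
        (MvPolynomial.X ⟨0, by omega⟩ : MvPolynomial (Fin n) ℚ) ⊗ₜ[ℚ]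
          (MvPolynomial.X ⟨0, by omega⟩ : MvPolynomial (Fin p) ℚ) +
        (MvPolynomial.X ⟨1, by omega⟩ : MvPolynomial (Fin n) ℚ) ⊗ₜ[ℚ] 1 := by
  rintro ⟨μstar, h⟩
  set φ0 : MvPolynomial (Fin n) ℚ →ₐ[ℚ] ℚ := MvPolynomial.aeval (fun _ => 0) with hφ0
  set φ1 : MvPolynomial (Fin n) ℚ →ₐ[ℚ] ℚ :=
    MvPolynomial.aeval (fun i => if i.val = 1 then (1:ℚ) else 0) with hφ1
  set ψ : MvPolynomial (Fin p) ℚ →ₐ[ℚ] ℚ := MvPolynomial.aeval (fun _ => 0) with hψ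
  have key : ∀ φ : MvPolynomial (Fin n) ℚ →ₐ[ℚ] ℚ,
      (Algebra.TensorProduct.productMap φ ψ).comp
        ((Algebra.TensorProduct.map (pi1star n (by omega))
          (AlgHom.id ℚ (MvPolynomial (Fin p) ℚ)))) =
      Algebra.TensorProduct.productMap (φ.comp (pi1star n (by omega))) ψ := by
    intro φ
    ext x
    · simp
    · simp
  have same : ∀ φ : MvPolynomial (Fin n) ℚ →ₐ[ℚ] ℚ, φ (MvPolynomial.X ⟨0, by omega⟩) = 0 →
      φ.comp (pi1star n (by omega)) = Polynomial.aeval (0 : ℚ) := by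
    intro φ hφ
    apply Polynomial.algHom_ext
    simp [pi1star, hφ]
  have e0 := congrArg (Algebra.TensorProduct.productMap φ0 ψ) h
  have e1 := congrArg (Algebra.TensorProduct.productMap φ1 ψ) h
  have l0 := congrArg (fun f => f (μstar (MvPolynomial.X ⟨1, by nlinarith⟩))) (key φ0)
  have l1 := congrArg (fun f => f (μstar (MvPolynomial.X ⟨1, by nlinarith⟩))) (key φ1)
  have s0 : φ0 (MvPolynomial.X ⟨0, by omega⟩) = 0 := by simp [φ0]
  have s1 : φ1 (MvPolynomial.X ⟨0, by omega⟩) = 0 := by simp [φ1]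
  simp only [AlgHom.comp_apply] at l0 l1
  simp only [l0, same φ0 s0] at e0
  simp only [l1, same φ1 s1] at e1
  have final := e0.symm.trans e1
  set_option synthInstance.maxHeartbeats 1000000 in
  simp only [map_add, Algebra.TensorProduct.productMap_apply_tmul, map_one, one_mul,
    mul_one] at final
  simp [φ0, φ1, ψ] at final
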